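/- Let f : V → V be a nonexpansive map on a finite dimensional real normed space (V,‖·‖) with closed unit ball B₁. Then the following are equivalent: (1) the fixed point set Fix(f) = {x ∈ V : f(x) = x} is nonempty and bounded; (2) for every y ∈ V with y ≠ 0 there exist w ∈ V and λ > 0 such that w − f(w) = λ y; (3) there exist finitely many points w₁, …, w_m ∈ V such that the set {f(w_i) − w_i : i = 1, …, m} illuminates B₁. -/

import Mathlib

/-- A set `S` illuminates a set `K` if every point of the boundary of `K` can be moved
into the interior of `K` by adding a positive multiple of some element of `S`. -/
def Illuminates {V : Type*} [NormedAddCommGroup V] [NormedSpace ℝ V]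
    (S K : Set V) : Prop :=
  ∀ x ∈ frontier K, ∃ v ∈ S, ∃ l : ℝ, 0 < l ∧ x + l • v ∈ interior K


open Metric Filter Topology
set_option maxHeartbeats 1000000
set_option linter.unusedSectionVars false

section Aux
variable {V : Type*} [NormedAddCommGroup V] [NormedSpace ℝ V] [FiniteDimensional ℝ V]

lemma exists_fp (f : V → V) (hf : ∀ x y : V, ‖f x - f y‖ ≤ ‖x - y‖)
    {t : ℝ} (ht0 : 0 < t) (ht1 : t < 1) (c : V) : ∃ x : V, x = t • f x + c := by
  have hlip : LipschitzWith t.toNNReal (fun x => t • f x + c) := by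
    apply LipschitzWith.of_dist_le_mul
    intro x y
    simp only [dist_eq_norm, add_sub_add_right_eq_sub, ← smul_sub, norm_smul,
      Real.norm_eq_abs, abs_of_pos ht0, Real.coe_toNNReal _ ht0.le]
    exact mul_le_mul_of_nonneg_left (hf x y) ht0.le
  have hK : (t.toNNReal : NNReal) < 1 := by
    rw [← Real.toNNReal_one]
    exact (Real.toNNReal_lt_toNNReal_iff one_pos).mpr ht1
  have hc : ContractingWith t.toNNReal (fun x => t • f x + c) := ⟨hK, hlip⟩
  obtain ⟨y, hy, -⟩ := hc.exists_fixedPoint 0 (edist_ne_top _ _)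
  exact ⟨y, hy.symm⟩

lemma norm_smul_sub_est (ζ w : V) (h : 2 * ‖w‖ + 1 ≤ ‖ζ‖) :
    ‖‖ζ‖⁻¹ • ζ - ‖ζ - w‖⁻¹ • (ζ - w)‖ ≤ 2 * ‖w‖ * ‖ζ - w‖⁻¹ := by
  have hw : 0 ≤ ‖w‖ := norm_nonneg w
  have hrpos : (0:ℝ) < ‖ζ‖ := by linarith
  have hqw : ‖w‖ + 1 ≤ ‖ζ - w‖ := by
    have := norm_sub_norm_le ζ w
    linarith [this]
  have hqpos : (0:ℝ) < ‖ζ - w‖ := by linarith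
  have hdiff : |‖ζ - w‖ - ‖ζ‖| ≤ ‖w‖ := by
    have := abs_norm_sub_norm_le (ζ - w) ζ
    simpa [norm_sub_rev] using this
  have key : ‖ζ‖⁻¹ • ζ - ‖ζ - w‖⁻¹ • (ζ - w)
      = (‖ζ‖⁻¹ - ‖ζ - w‖⁻¹) • ζ + ‖ζ - w‖⁻¹ • w := by
    rw [sub_smul, smul_sub]
    abel
  rw [key]
  have h1 : ‖(‖ζ‖⁻¹ - ‖ζ - w‖⁻¹) • ζ‖ ≤ ‖w‖ * ‖ζ - w‖⁻¹ := by
    rw [norm_smul, Real.norm_eq_abs]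
    have heq : ‖ζ‖⁻¹ - ‖ζ - w‖⁻¹ = (‖ζ - w‖ - ‖ζ‖) * (‖ζ‖⁻¹ * ‖ζ - w‖⁻¹) := by
      field_simp
    rw [heq, abs_mul]
    have : |‖ζ‖⁻¹ * ‖ζ - w‖⁻¹| = ‖ζ‖⁻¹ * ‖ζ - w‖⁻¹ := by
      rw [abs_of_pos]
      positivity
    rw [this]
    calc |‖ζ - w‖ - ‖ζ‖| * (‖ζ‖⁻¹ * ‖ζ - w‖⁻¹) * ‖ζ‖
        = |‖ζ - w‖ - ‖ζ‖| * ‖ζ - w‖⁻¹ * (‖ζ‖⁻¹ * ‖ζ‖) := by ring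
      _ = |‖ζ - w‖ - ‖ζ‖| * ‖ζ - w‖⁻¹ := by rw [inv_mul_cancel₀ hrpos.ne', mul_one]
      _ ≤ ‖w‖ * ‖ζ - w‖⁻¹ := by
          apply mul_le_mul_of_nonneg_right hdiff
          positivity
  have h2 : ‖‖ζ - w‖⁻¹ • w‖ ≤ ‖w‖ * ‖ζ - w‖⁻¹ := by
    rw [norm_smul, Real.norm_eq_abs, abs_of_pos (by positivity)]
    ring_nf
    exact le_refl _
  calc ‖(‖ζ‖⁻¹ - ‖ζ - w‖⁻¹) • ζ + ‖ζ - w‖⁻¹ • w‖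
      ≤ ‖(‖ζ‖⁻¹ - ‖ζ - w‖⁻¹) • ζ‖ + ‖‖ζ - w‖⁻¹ • w‖ := norm_add_le _ _
    _ ≤ ‖w‖ * ‖ζ - w‖⁻¹ + ‖w‖ * ‖ζ - w‖⁻¹ := add_le_add h1 h2
    _ = 2 * ‖w‖ * ‖ζ - w‖⁻¹ := by ring

lemma keyU (f : V → V) (hf : ∀ x y : V, ‖f x - f y‖ ≤ ‖x - y‖)
    (z : ℕ → V) (s : ℕ → ℝ) (hs : ∀ n, 0 ≤ s n)
    (hz : ∀ n, f (z n) = (1 + s n) • z n)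
    (hnorm : Tendsto (fun n => ‖z n‖) atTop atTop) :
    ∃ u : V, ‖u‖ = 1 ∧ ∀ (w : V) (l : ℝ), 0 < l → 1 ≤ ‖u + l • (f w - w)‖ := by
  -- find N with norms ≥ 1 from N on
  obtain ⟨N, hN⟩ := eventually_atTop.mp (hnorm.eventually_ge_atTop 1)
  have hzn : ∀ n, (1:ℝ) ≤ ‖z (n + N)‖ := fun n => hN (n + N) (Nat.le_add_left N n)
  have hy : ∀ n, ‖z (n + N)‖⁻¹ • z (n + N) ∈ sphere (0:V) 1 := by
    intro n
    have h0 : (0:ℝ) < ‖z (n + N)‖ := lt_of_lt_of_le one_pos (hzn n)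
    simp [mem_sphere_zero_iff_norm, norm_smul, abs_of_pos (inv_pos.mpr h0),
      inv_mul_cancel₀ h0.ne']
  obtain ⟨u, hu_mem, φ, hφ, hconv⟩ :=
    (isCompact_sphere (0:V) 1).tendsto_subseq hy
  have hu1 : ‖u‖ = 1 := mem_sphere_zero_iff_norm.mp hu_mem
  refine ⟨u, hu1, ?_⟩
  intro w l hl
  set ζ : ℕ → V := fun k => z (φ k + N) with hζdef
  have hidx : Tendsto (fun k => φ k + N) atTop atTop :=
    (hφ.add_const N).tendsto_atTop
  have hζnorm : Tendsto (fun k => ‖ζ k‖) atTop atTop := hnorm.comp hidx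
  have hζconv : Tendsto (fun k => ‖ζ k‖⁻¹ • ζ k) atTop (𝓝 u) := hconv
  -- main pointwise estimate
  have main : ∀ k, 2 * ‖w‖ + 1 ≤ ‖ζ k‖ →
      1 - ‖u - ‖ζ k - w‖⁻¹ • (ζ k - w)‖ ≤ ‖u + l • (f w - w)‖ := by
    intro k hk
    set a : V := ζ k - w with hadef
    have hwn : (0:ℝ) ≤ ‖w‖ := norm_nonneg w
    have haq : ‖w‖ + 1 ≤ ‖a‖ := by
      have := norm_sub_norm_le (ζ k) w
      simp only [← hadef] at this
      linarith
    have hapos : (0:ℝ) < ‖a‖ := by linarith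
    obtain ⟨g, hg1, hga'⟩ := exists_dual_vector ℝ a (by
      intro h0
      rw [h0] at hapos
      exact lt_irrefl 0 hapos)
    have hga : g a = ‖a‖ := by exact_mod_cast hga'
    have hgb : ∀ x : V, |g x| ≤ ‖x‖ := by
      intro x
      have := g.le_opNorm x
      rw [hg1, one_mul] at this
      simpa [Real.norm_eq_abs] using this
    -- g (ζ k) ≥ 0
    have hgζ : g (ζ k) = ‖a‖ + g w := by
      have : (ζ k) = a + w := by rw [hadef]; abel
      rw [this, map_add, hga]
    have hgζ0 : 0 ≤ g (ζ k) := by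
      have := (abs_le.mp (hgb w)).1
      rw [hgζ]; linarith
    -- g (f w - w) ≥ 0
    have hfz : f (ζ k) - w = a + s (φ k + N) • ζ k := by
      rw [hz (φ k + N)]
      simp only [← hζdef, hadef, add_smul, one_smul]
      abel
    have hsplit : f w - w = (f w - f (ζ k)) + (f (ζ k) - w) := by abel
    have hgv : 0 ≤ g (f w - w) := by
      have h1 : g (f (ζ k) - w) = ‖a‖ + s (φ k + N) * g (ζ k) := by
        rw [hfz, map_add, hga, map_smul, smul_eq_mul]
      have h2 : -‖a‖ ≤ g (f w - f (ζ k)) := by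
        have habs := (abs_le.mp (hgb (f w - f (ζ k)))).1
        have hle : ‖f w - f (ζ k)‖ ≤ ‖a‖ := by
          have := hf w (ζ k)
          calc ‖f w - f (ζ k)‖ ≤ ‖w - ζ k‖ := this
            _ = ‖a‖ := by rw [hadef, norm_sub_rev]
        linarith
      have h3 : 0 ≤ s (φ k + N) * g (ζ k) := mul_nonneg (hs _) hgζ0
      rw [hsplit, map_add]
      linarith
    -- g u ≥ 1 - η
    have hgu : 1 - ‖u - ‖a‖⁻¹ • a‖ ≤ g u := by
      have h1 : g (‖a‖⁻¹ • a) = 1 := by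
        rw [map_smul, hga, smul_eq_mul, inv_mul_cancel₀ hapos.ne']
      have h2 : |g (‖a‖⁻¹ • a - u)| ≤ ‖u - ‖a‖⁻¹ • a‖ := by
        rw [norm_sub_rev u (‖a‖⁻¹ • a)]
        exact hgb _
      have h3 : g u = 1 - g (‖a‖⁻¹ • a - u) := by
        rw [map_sub, h1]; ring
      have := (abs_le.mp h2).2
      rw [h3]; linarith
    -- conclusion
    have hfinal : g (u + l • (f w - w)) ≤ ‖u + l • (f w - w)‖ := by
      have := (abs_le.mp (hgb (u + l • (f w - w)))).2
      linarith
    have : g (u + l • (f w - w)) = g u + l * g (f w - w) := by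
      rw [map_add, map_smul, smul_eq_mul]
    rw [this] at hfinal
    have : 0 ≤ l * g (f w - w) := mul_nonneg hl.le hgv
    linarith
  -- limit argument
  have hη : Tendsto (fun k => ‖u - ‖ζ k - w‖⁻¹ • (ζ k - w)‖) atTop (𝓝 0) := by
    have haT : Tendsto (fun k => ‖ζ k - w‖) atTop atTop := by
      apply tendsto_atTop_mono' atTop ?_ (tendsto_atTop_add_const_right atTop (-‖w‖) hζnorm)
      filter_upwards with k
      have := norm_sub_norm_le (ζ k) w
      linarith
    have hb2 : Tendsto (fun k => 2 * ‖w‖ * ‖ζ k - w‖⁻¹) atTop (𝓝 0) := by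
      have := haT.inv_tendsto_atTop
      have h2 := this.const_mul (2 * ‖w‖)
      simpa using h2
    have hb1 : Tendsto (fun k => ‖u - ‖ζ k‖⁻¹ • ζ k‖) atTop (𝓝 0) := by
      have := tendsto_iff_norm_sub_tendsto_zero.mp hζconv
      simpa [norm_sub_rev] using this
    have hsum : Tendsto (fun k => ‖u - ‖ζ k‖⁻¹ • ζ k‖ + 2 * ‖w‖ * ‖ζ k - w‖⁻¹)
        atTop (𝓝 0) := by
      simpa using hb1.add hb2
    apply squeeze_zero' (Eventually.of_forall (fun k => norm_nonneg _)) ?_ hsum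
    filter_upwards [hζnorm.eventually_ge_atTop (2 * ‖w‖ + 1)] with k hk
    calc ‖u - ‖ζ k - w‖⁻¹ • (ζ k - w)‖
        ≤ ‖u - ‖ζ k‖⁻¹ • ζ k‖ + ‖‖ζ k‖⁻¹ • ζ k - ‖ζ k - w‖⁻¹ • (ζ k - w)‖ :=
          norm_sub_le_norm_sub_add_norm_sub _ _ _
      _ ≤ ‖u - ‖ζ k‖⁻¹ • ζ k‖ + 2 * ‖w‖ * ‖ζ k - w‖⁻¹ := by
          have := norm_smul_sub_est (ζ k) w hk
          linarith
  have hlim : Tendsto (fun k => 1 - ‖u - ‖ζ k - w‖⁻¹ • (ζ k - w)‖) atTop (𝓝 1) := by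
    have := (tendsto_const_nhds (x := (1:ℝ)) (f := atTop)).sub hη
    simpa using this
  apply le_of_tendsto hlim
  filter_upwards [hζnorm.eventually_ge_atTop (2 * ‖w‖ + 1)] with k hk
  exact main k hk

lemma seq_of_not_one (f : V → V) (hf : ∀ x y : V, ‖f x - f y‖ ≤ ‖x - y‖)
    (h1 : ¬ ({x : V | f x = x}.Nonempty ∧ Bornology.IsBounded {x : V | f x = x})) :
    ∃ (z : ℕ → V) (s : ℕ → ℝ), (∀ n, 0 ≤ s n) ∧ (∀ n, f (z n) = (1 + s n) • z n) ∧
      Tendsto (fun n => ‖z n‖) atTop atTop := by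
  have hcont : Continuous f := by
    have : LipschitzWith 1 f := by
      apply LipschitzWith.of_dist_le_mul
      intro x y
      simpa [dist_eq_norm] using hf x y
    exact this.continuous
  rcases ({x : V | f x = x}).eq_empty_or_nonempty with hemp | hne
  · -- Fix empty
    set t : ℕ → ℝ := fun n => (n + 1) / (n + 2) with htdef
    have ht0 : ∀ n, (0:ℝ) < t n := by intro n; positivity
    have ht1 : ∀ n, t n < 1 := by
      intro n
      rw [htdef]
      rw [div_lt_one (by positivity)]
      linarith
    have hz : ∀ n, ∃ x : V, x = t n • f x + 0 := fun n => exists_fp f hf (ht0 n) (ht1 n) 0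
    choose z hzfp using hz
    simp only [add_zero] at hzfp
    set s : ℕ → ℝ := fun n => (t n)⁻¹ - 1 with hsdef
    have hs0 : ∀ n, 0 ≤ s n := by
      intro n
      have h1 : (1:ℝ) ≤ (t n)⁻¹ := (one_le_inv₀ (ht0 n)).mpr (ht1 n).le
      simp only [hsdef]; linarith
    have hfz : ∀ n, f (z n) = (1 + s n) • z n := by
      intro n
      have h2 : (1 + s n) = (t n)⁻¹ := by simp [hsdef]
      rw [h2]
      have : (t n)⁻¹ • z n = f (z n) := by
        conv_lhs => rw [hzfp n]
        rw [smul_smul, inv_mul_cancel₀ (ht0 n).ne', one_smul]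
      exact this.symm
    refine ⟨z, s, hs0, hfz, ?_⟩
    -- tendsto atTop
    by_contra hT
    have hfreq : ∃ b : ℝ, ∃ᶠ n in atTop, ‖z n‖ ≤ b := by
      by_contra hb
      push_neg at hb
      apply hT
      apply Filter.tendsto_atTop.mpr
      intro b
      have := hb b
      filter_upwards [this] with n hn
      linarith
    obtain ⟨b, hb⟩ := hfreq
    obtain ⟨ψ, hψmono, hψ⟩ := extraction_of_frequently_atTop hb
    have hmem : ∀ k, z (ψ k) ∈ closedBall (0:V) b := by
      intro k
      simpa [mem_closedBall, dist_eq_norm] using hψ k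
    obtain ⟨xs, hxsmem, ρ, hρmono, hρconv⟩ :=
      (isCompact_closedBall (0:V) b).tendsto_subseq hmem
    have hsmall : ∀ m, s m ≤ 1 / (m + 1) := by
      intro m
      have : (t m)⁻¹ = ((m:ℝ) + 2) / (m + 1) := by
        rw [htdef]
        rw [inv_div]
      simp only [hsdef, this]
      rw [div_sub' (by positivity : ((m:ℝ) + 1) ≠ 0)]
      ring_nf
      exact le_refl _
    have hsz : Tendsto (fun k => s (ψ (ρ k))) atTop (𝓝 0) := by
      apply squeeze_zero (g := fun k : ℕ => 1/((k:ℝ)+1)) (fun k => hs0 _) (fun k => ?_)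
        tendsto_one_div_add_atTop_nhds_zero_nat
      calc s (ψ (ρ k)) ≤ 1/((ψ (ρ k):ℝ)+1) := hsmall _
        _ ≤ 1/((k:ℝ)+1) := by
            apply one_div_le_one_div_of_le (by positivity)
            have hk : k ≤ ψ (ρ k) := (hψmono.comp hρmono).le_apply
            have : (k:ℝ) ≤ (ψ (ρ k) : ℝ) := Nat.cast_le.mpr hk
            linarith
    have hfconv : Tendsto (fun k => f (z (ψ (ρ k)))) atTop (𝓝 (f xs)) :=
      (hcont.tendsto xs).comp hρconv
    have hfconv2 : Tendsto (fun k => f (z (ψ (ρ k)))) atTop (𝓝 (((1:ℝ)+0) • xs)) := by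
      have heq : (fun k => f (z (ψ (ρ k)))) = fun k => (1 + s (ψ (ρ k))) • z (ψ (ρ k)) := by
        funext k
        exact hfz _
      rw [heq]
      exact (tendsto_const_nhds.add hsz).smul hρconv
    have : f xs = xs := by
      have := tendsto_nhds_unique hfconv hfconv2
      simpa using this
    have : xs ∈ {x : V | f x = x} := this
    rw [hemp] at this
    exact this
  · -- Fix nonempty, unbounded
    have hnb : ¬ Bornology.IsBounded {x : V | f x = x} := fun hb => h1 ⟨hne, hb⟩
    rw [isBounded_iff_forall_norm_le] at hnb
    push_neg at hnb
    have hz : ∀ n : ℕ, ∃ x, x ∈ {x : V | f x = x} ∧ (n:ℝ) < ‖x‖ := by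
      intro n
      obtain ⟨x, hx1, hx2⟩ := hnb n
      exact ⟨x, hx1, hx2⟩
    choose z hzfix hznorm using hz
    refine ⟨z, fun _ => 0, fun n => le_refl 0, fun n => ?_, ?_⟩
    · simp only [add_zero, one_smul]
      exact hzfix n
    · apply tendsto_atTop_mono (fun n => (hznorm n).le)
      exact tendsto_natCast_atTop_atTop

lemma one_to_two (f : V → V) (hf : ∀ x y : V, ‖f x - f y‖ ≤ ‖x - y‖)
    (hne : {x : V | f x = x}.Nonempty) (hbd : Bornology.IsBounded {x : V | f x = x})
    (y : V) (hy : y ≠ 0) : ∃ (w : V) (l : ℝ), 0 < l ∧ w - f w = l • y := by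
  by_contra hcon
  push_neg at hcon
  have hcont : Continuous f := by
    have : LipschitzWith 1 f := by
      apply LipschitzWith.of_dist_le_mul
      intro x y
      simpa [dist_eq_norm] using hf x y
    exact this.continuous
  obtain ⟨z₀, hz₀⟩ := hne
  have hz₀ : f z₀ = z₀ := hz₀
  obtain ⟨M, hM⟩ := isBounded_iff_forall_norm_le.mp hbd
  have hyn : (0:ℝ) < ‖y‖ := norm_pos_iff.mpr hy
  set R : ℝ := max M (2 * ‖z₀‖) + 1 with hRdef
  have hMR : M < R := by
    have := le_max_left M (2 * ‖z₀‖); simp only [hRdef]; linarith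
  have hz₀R : 2 * ‖z₀‖ < R := by
    have := le_max_right M (2 * ‖z₀‖); simp only [hRdef]; linarith
  have hR0 : 0 < R := by
    have : (0:ℝ) ≤ 2 * ‖z₀‖ := by positivity
    linarith
  set t : ℕ → ℝ := fun n => (n + 1) / (n + 2) with htdef
  have ht0 : ∀ n, (0:ℝ) < t n := by intro n; positivity
  have ht1 : ∀ n, t n < 1 := by
    intro n
    rw [htdef, div_lt_one (by positivity)]
    linarith
  have hthalf : ∀ n, (1:ℝ)/2 ≤ t n := by
    intro n
    rw [htdef, div_le_div_iff₀ (by norm_num) (by positivity)]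
    have : (0:ℝ) ≤ (n:ℝ) := Nat.cast_nonneg n
    linarith
  have hX : ∀ (n : ℕ) (l : ℝ), ∃ x : V, x = t n • f x + (t n * l) • y :=
    fun n l => exists_fp f hf (ht0 n) (ht1 n) ((t n * l) • y)
  choose X hXfp using hX
  -- Lipschitz in l
  have hXlip : ∀ n l l', ‖X n l - X n l'‖ ≤ (t n * ‖y‖ / (1 - t n)) * |l - l'| := by
    intro n l l'
    have he : X n l - X n l' = t n • (f (X n l) - f (X n l')) + ((t n * l - t n * l') • y) := by
      conv_lhs => rw [hXfp n l, hXfp n l']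
      module
    have hb : ‖X n l - X n l'‖ ≤ t n * ‖X n l - X n l'‖ + t n * ‖y‖ * |l - l'| := by
      calc ‖X n l - X n l'‖
          ≤ ‖t n • (f (X n l) - f (X n l'))‖ + ‖(t n * l - t n * l') • y‖ := by
            rw [he]; exact norm_add_le _ _
        _ ≤ t n * ‖X n l - X n l'‖ + t n * ‖y‖ * |l - l'| := by
            apply add_le_add
            · rw [norm_smul, Real.norm_eq_abs, abs_of_pos (ht0 n)]
              exact mul_le_mul_of_nonneg_left (hf _ _) (ht0 n).le
            · rw [norm_smul, Real.norm_eq_abs]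
              have : t n * l - t n * l' = t n * (l - l') := by ring
              rw [this, abs_mul, abs_of_pos (ht0 n)]
              ring_nf
              exact le_refl _
    have h1t : 0 < 1 - t n := by linarith [ht1 n]
    rw [div_mul_eq_mul_div, le_div_iff₀ h1t]
    nlinarith [hb]
  have hcontX : ∀ n, Continuous fun l => ‖X n l‖ := by
    intro n
    have hlip : LipschitzWith (Real.toNNReal (t n * ‖y‖ / (1 - t n))) (X n) := by
      apply LipschitzWith.of_dist_le_mul
      intro l l'
      rw [dist_eq_norm, Real.dist_eq, Real.coe_toNNReal _ (by
        have : 0 < 1 - t n := by linarith [ht1 n]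
        positivity)]
      exact hXlip n l l'
    exact continuous_norm.comp hlip.continuous
  -- value at 0
  have hX0 : ∀ n, ‖X n 0‖ ≤ 2 * ‖z₀‖ := by
    intro n
    have he : X n 0 - z₀ = t n • (f (X n 0) - f z₀) + (t n - 1) • z₀ := by
      conv_lhs => rw [hXfp n 0]
      rw [hz₀]
      module
    have h1 : ‖X n 0 - z₀‖ ≤ t n * ‖X n 0 - z₀‖ + (1 - t n) * ‖z₀‖ := by
      calc ‖X n 0 - z₀‖ ≤ ‖t n • (f (X n 0) - f z₀)‖ + ‖(t n - 1) • z₀‖ := by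
            rw [he]; exact norm_add_le _ _
        _ ≤ t n * ‖X n 0 - z₀‖ + (1 - t n) * ‖z₀‖ := by
            apply add_le_add
            · rw [norm_smul, Real.norm_eq_abs, abs_of_pos (ht0 n)]
              exact mul_le_mul_of_nonneg_left (hf _ _) (ht0 n).le
            · rw [norm_smul, Real.norm_eq_abs, abs_of_neg (by linarith [ht1 n])]
              ring_nf
              exact le_refl _
    have h1t : 0 < 1 - t n := by linarith [ht1 n]
    have h2 : ‖X n 0 - z₀‖ ≤ ‖z₀‖ := by nlinarith
    calc ‖X n 0‖ ≤ ‖X n 0 - z₀‖ + ‖z₀‖ := by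
          have := norm_sub_norm_le (X n 0) z₀; linarith [norm_add_le (X n 0 - z₀) z₀,
            (by abel : X n 0 - z₀ + z₀ = X n 0)]
      _ ≤ 2 * ‖z₀‖ := by linarith
  -- value at L
  set L : ℝ := (4 * R + 2 * ‖f 0‖ + 4) / ‖y‖ with hLdef
  have hL0 : 0 < L := by
    have : (0:ℝ) ≤ ‖f 0‖ := norm_nonneg _
    apply div_pos (by linarith) hyn
  have hXL : ∀ n, R ≤ ‖X n L‖ := by
    intro n
    have he : (t n * L) • y = X n L - t n • f (X n L) := by
      rw [eq_sub_iff_add_eq, add_comm]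
      exact (hXfp n L).symm
    have h1 : t n * L * ‖y‖ ≤ ‖X n L‖ + t n * ‖f (X n L)‖ := by
      have hnorm : ‖(t n * L) • y‖ = t n * L * ‖y‖ := by
        rw [norm_smul, Real.norm_eq_abs, abs_of_pos (by positivity : 0 < t n * L)]
      calc t n * L * ‖y‖ = ‖(t n * L) • y‖ := hnorm.symm
        _ = ‖X n L - t n • f (X n L)‖ := by rw [he]
        _ ≤ ‖X n L‖ + ‖t n • f (X n L)‖ := norm_sub_le _ _
        _ = ‖X n L‖ + t n * ‖f (X n L)‖ := by
            rw [norm_smul, Real.norm_eq_abs, abs_of_pos (ht0 n)]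
    have h2 : ‖f (X n L)‖ ≤ ‖X n L‖ + ‖f 0‖ := by
      have h3 := hf (X n L) 0
      have h4 : ‖f (X n L)‖ ≤ ‖f (X n L) - f 0‖ + ‖f 0‖ := by
        have := norm_add_le (f (X n L) - f 0) (f 0)
        simpa using this
      simp only [sub_zero] at h3
      linarith
    have h3 : t n * L * ‖y‖ = t n * (4 * R + 2 * ‖f 0‖ + 4) := by
      rw [hLdef]
      field_simp
    have h4 := hthalf n
    have h5 := (ht1 n).le
    have h6 : (0:ℝ) ≤ ‖f 0‖ := norm_nonneg _
    have h7 : (0:ℝ) ≤ ‖X n L‖ := norm_nonneg _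
    nlinarith [mul_le_mul_of_nonneg_left h2 (ht0 n).le]
  -- IVT
  have hIVT : ∀ n, ∃ l ∈ Set.Icc (0:ℝ) L, ‖X n l‖ = R := by
    intro n
    have hmem : R ∈ Set.Icc (‖X n 0‖) (‖X n L‖) := ⟨by linarith [hX0 n], hXL n⟩
    obtain ⟨l, hl1, hl2⟩ := intermediate_value_Icc hL0.le ((hcontX n).continuousOn) hmem
    exact ⟨l, hl1, hl2⟩
  choose lam hlamI hlamR using hIVT
  obtain ⟨lstar, hlstar_mem, φ₁, hφ₁, hlconv⟩ :=
    (isCompact_Icc (a := (0:ℝ)) (b := L)).tendsto_subseq hlamI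
  have hxmem : ∀ k, X (φ₁ k) (lam (φ₁ k)) ∈ sphere (0:V) R := by
    intro k
    simp [mem_sphere_iff_norm, hlamR _]
  obtain ⟨xs, hxsmem, φ₂, hφ₂, hxconv⟩ := (isCompact_sphere (0:V) R).tendsto_subseq hxmem
  set idx : ℕ → ℕ := fun k => φ₁ (φ₂ k) with hidxdef
  have hidxT : Tendsto idx atTop atTop := (hφ₁.comp hφ₂).tendsto_atTop
  have htlim : Tendsto (fun k => t (idx k)) atTop (𝓝 1) := by
    have hbase : Tendsto t atTop (𝓝 1) := by
      have : t = fun n : ℕ => 1 - 1/((n:ℝ) + 2) := by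
        funext n
        rw [htdef]
        field_simp
        ring
      rw [this]
      have h2 : Tendsto (fun n : ℕ => 1/((n:ℝ) + 2)) atTop (𝓝 0) := by
        apply Tendsto.comp tendsto_inv_atTop_zero ?_ |>.congr (fun n => by rw [Function.comp, one_div])
        exact tendsto_atTop_add_const_right atTop 2 tendsto_natCast_atTop_atTop
      simpa using (tendsto_const_nhds (x := (1:ℝ)) (f := atTop)).sub h2
    exact hbase.comp hidxT
  have hllim : Tendsto (fun k => lam (idx k)) atTop (𝓝 lstar) := hlconv.comp hφ₂.tendsto_atTop
  have hXconv : Tendsto (fun k => X (idx k) (lam (idx k))) atTop (𝓝 xs) := hxconv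
  have hfXconv : Tendsto (fun k => f (X (idx k) (lam (idx k)))) atTop (𝓝 (f xs)) :=
    (hcont.tendsto xs).comp hXconv
  have hRHS : Tendsto (fun k => t (idx k) • f (X (idx k) (lam (idx k)))
      + (t (idx k) * lam (idx k)) • y) atTop (𝓝 ((1:ℝ) • f xs + ((1:ℝ) * lstar) • y)) := by
    exact (htlim.smul hfXconv).add ((htlim.mul hllim).smul tendsto_const_nhds)
  have hfix : xs = f xs + lstar • y := by
    have heq : (fun k => X (idx k) (lam (idx k)))
        = fun k => t (idx k) • f (X (idx k) (lam (idx k))) + (t (idx k) * lam (idx k)) • y := by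
      funext k
      exact hXfp _ _
    have := tendsto_nhds_unique (heq ▸ hXconv) hRHS
    simpa using this
  have hxsR : ‖xs‖ = R := mem_sphere_zero_iff_norm.mp hxsmem
  rcases eq_or_lt_of_le hlstar_mem.1 with h0 | hpos
  · -- lstar = 0 : xs is a fixed point of norm R > M
    rw [← h0] at hfix
    simp only [zero_smul, add_zero] at hfix
    have := hM xs hfix.symm
    linarith
  · -- lstar > 0 : contradiction with hcon
    apply hcon xs lstar hpos
    nth_rewrite 1 [hfix]
    abel

lemma two_to_three (f : V → V)
    (h2 : ∀ y : V, y ≠ 0 → ∃ (w : V) (l : ℝ), 0 < l ∧ w - f w = l • y) :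
    ∃ (m : ℕ) (w : Fin m → V),
      Illuminates {v : V | ∃ i, v = f (w i) - w i} (Metric.closedBall 0 1) := by
  have hch : ∀ x : V, ∃ (w : V) (l : ℝ), ‖x‖ = 1 → 0 < l ∧ w - f w = l • x := by
    intro x
    by_cases hx : ‖x‖ = 1
    · obtain ⟨w, l, h⟩ := h2 x (by
        intro h0
        rw [h0, norm_zero] at hx
        norm_num at hx)
      exact ⟨w, l, fun _ => h⟩
    · exact ⟨0, 1, fun h => absurd h hx⟩
  choose W Λ hWΛ using hch
  have hcov : sphere (0:V) 1 ⊆ ⋃ c ∈ sphere (0:V) 1, ball c 1 := by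
    intro x hx
    exact Set.mem_biUnion hx (by simp [mem_ball])
  obtain ⟨T, hTsub, hTfin, hTcov⟩ :=
    (isCompact_sphere (0:V) 1).elim_finite_subcover_image (fun c _ => isOpen_ball) hcov
  refine ⟨hTfin.toFinset.card, fun i => W ((hTfin.toFinset.equivFin.symm i) : V), ?_⟩
  intro x hx
  rw [frontier_closedBall 0 one_ne_zero] at hx
  obtain ⟨c, hcT, hxc⟩ := Set.mem_iUnion₂.mp (hTcov hx)
  have hc1 : ‖c‖ = 1 := mem_sphere_zero_iff_norm.mp (hTsub hcT)
  obtain ⟨hΛpos, hWc⟩ := hWΛ c hc1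
  have hcT' : c ∈ hTfin.toFinset := hTfin.mem_toFinset.mpr hcT
  set i : Fin hTfin.toFinset.card := hTfin.toFinset.equivFin ⟨c, hcT'⟩ with hidef
  have hwi : W ((hTfin.toFinset.equivFin.symm i) : V) = W c := by
    rw [hidef, Equiv.symm_apply_apply]
  refine ⟨f (W ((hTfin.toFinset.equivFin.symm i) : V)) - W ((hTfin.toFinset.equivFin.symm i) : V),
    ⟨i, rfl⟩, (Λ c)⁻¹, inv_pos.mpr hΛpos, ?_⟩
  rw [interior_closedBall 0 one_ne_zero, mem_ball_zero_iff]
  have hv : f (W ((hTfin.toFinset.equivFin.symm i) : V)) - W ((hTfin.toFinset.equivFin.symm i) : V)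
      = -(Λ c • c) := by
    rw [hwi, ← hWc]
    abel
  rw [hv, smul_neg, smul_smul, inv_mul_cancel₀ hΛpos.ne', one_smul]
  have : x + -c = x - c := by abel
  rw [this]
  exact mem_ball_iff_norm.mp hxc

end Aux

/-- For a nonexpansive map `f` on a finite dimensional real normed space the following
are equivalent: the fixed point set is nonempty and bounded; every nonzero direction `y`
is realized as `w - f(w) = λ y` with `λ > 0`; finitely many vectors of the form
`f(wᵢ) - wᵢ` illuminate the closed unit ball. -/
theorem stmt6 {V : Type*} [NormedAddCommGroup V] [NormedSpace ℝ V] [FiniteDimensional ℝ V]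
    (f : V → V) (hf : ∀ x y : V, ‖f x - f y‖ ≤ ‖x - y‖) :
    List.TFAE [
      {x : V | f x = x}.Nonempty ∧ Bornology.IsBounded {x : V | f x = x},
      ∀ y : V, y ≠ 0 → ∃ (w : V) (l : ℝ), 0 < l ∧ w - f w = l • y,
      ∃ (m : ℕ) (w : Fin m → V),
        Illuminates {v : V | ∃ i, v = f (w i) - w i} (Metric.closedBall 0 1)] := by
  tfae_have 1 → 2 := by
    rintro ⟨hne, hbd⟩ y hy
    exact one_to_two f hf hne hbd y hy
  tfae_have 2 → 1 := by
    intro h2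
    by_contra h1
    obtain ⟨z, s, hs, hz, hn⟩ := seq_of_not_one f hf h1
    obtain ⟨u, hu1, hu⟩ := keyU f hf z s hs hz hn
    obtain ⟨w, l, hl, hwl⟩ := h2 u (by
      intro h0
      rw [h0, norm_zero] at hu1
      norm_num at hu1)
    have hineq := hu w l⁻¹ (inv_pos.mpr hl)
    have hv : f w - w = -(l • u) := by
      rw [← hwl]
      abel
    rw [hv, smul_neg, smul_smul, inv_mul_cancel₀ hl.ne', one_smul] at hineq
    simp only [add_neg_cancel, norm_zero] at hineq
    norm_num at hineq
  tfae_have 2 → 3 := by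
    intro h2
    exact two_to_three f h2
  tfae_have 3 → 1 := by
    intro h3
    by_contra h1
    obtain ⟨z, s, hs, hz, hn⟩ := seq_of_not_one f hf h1
    obtain ⟨u, hu1, hu⟩ := keyU f hf z s hs hz hn
    obtain ⟨m, w, hIll⟩ := h3
    have hufr : u ∈ frontier (Metric.closedBall (0:V) 1) := by
      rw [frontier_closedBall 0 one_ne_zero]
      exact mem_sphere_zero_iff_norm.mpr hu1
    obtain ⟨v, ⟨i, hvi⟩, l, hl, hmem⟩ := hIll u hufr
    rw [interior_closedBall 0 one_ne_zero, mem_ball_zero_iff] at hmem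
    have := hu (w i) l hl
    rw [← hvi] at this
    linarith
  tfae_finish
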